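/- If {Π_ξ} is a finite family of positive semidefinite operators on ℂ^d satisfying Σ_ξ (Π_ξ⊗Π_ξ)/tr(Π_ξ) = (Σ_ξ w_ξ/d)·[((1+℘)/(d+1)) P₊ + ((1−℘)/(d−1)) P₋] where w_ξ = tr(Π_ξ) and ℘ is the weighted average purity, then Σ_ξ Π_ξ = (Σ_ξ w_ξ/d)·1; in particular, a generalized 2-design forms a POVM after rescaling. -/

import Mathlib

open Matrix Kronecker ComplexOrder BigOperators

/-- The swap operator `V` on `ℂ^d ⊗ ℂ^d`, `V(x ⊗ y) = y ⊗ x`. -/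
noncomputable def swapOp (d : ℕ) : Matrix (Fin d × Fin d) (Fin d × Fin d) ℂ :=
  fun p q => if p.1 = q.2 ∧ p.2 = q.1 then 1 else 0

/-- Projector onto the symmetric subspace of `ℂ^d ⊗ ℂ^d`. -/
noncomputable def Pplus (d : ℕ) : Matrix (Fin d × Fin d) (Fin d × Fin d) ℂ :=
  (2 : ℂ)⁻¹ • (1 + swapOp d)

/-- Projector onto the antisymmetric subspace of `ℂ^d ⊗ ℂ^d`. -/
noncomputable def Pminus (d : ℕ) : Matrix (Fin d × Fin d) (Fin d × Fin d) ℂ :=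
  (2 : ℂ)⁻¹ • (1 - swapOp d)

/-- Partial trace over the first tensor factor. -/
noncomputable def ptr1 {d : ℕ} (Q : Matrix (Fin d × Fin d) (Fin d × Fin d) ℂ) :
    Matrix (Fin d) (Fin d) ℂ :=
  fun j k => ∑ i, Q (i, j) (i, k)

/-- Partial trace over the second tensor factor. -/
noncomputable def ptr2 {d : ℕ} (Q : Matrix (Fin d × Fin d) (Fin d × Fin d) ℂ) :
    Matrix (Fin d) (Fin d) ℂ :=
  fun i j => ∑ k, Q (i, k) (j, k)

lemma ptr1_smul {d : ℕ} (c : ℂ) (Q : Matrix (Fin d × Fin d) (Fin d × Fin d) ℂ) :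
    ptr1 (c • Q) = c • ptr1 Q := by
  ext j k
  simp [ptr1, Finset.mul_sum]

lemma ptr1_add {d : ℕ} (Q R : Matrix (Fin d × Fin d) (Fin d × Fin d) ℂ) :
    ptr1 (Q + R) = ptr1 Q + ptr1 R := by
  ext j k
  simp [ptr1, Finset.sum_add_distrib]

lemma ptr1_sub {d : ℕ} (Q R : Matrix (Fin d × Fin d) (Fin d × Fin d) ℂ) :
    ptr1 (Q - R) = ptr1 Q - ptr1 R := by
  ext j k
  simp [ptr1, Finset.sum_sub_distrib]

lemma ptr1_sum {d n : ℕ} (f : Fin n → Matrix (Fin d × Fin d) (Fin d × Fin d) ℂ) :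
    ptr1 (∑ ξ, f ξ) = ∑ ξ, ptr1 (f ξ) := by
  ext j k
  simp only [ptr1, Matrix.sum_apply]
  rw [Finset.sum_comm]

lemma ptr1_one {d : ℕ} : ptr1 (1 : Matrix (Fin d × Fin d) (Fin d × Fin d) ℂ)
    = (d : ℂ) • 1 := by
  ext j k
  simp only [ptr1, Matrix.one_apply, Prod.mk.injEq, Matrix.smul_apply, smul_eq_mul]
  by_cases h : j = k
  · simp [h]
  · simp [h]

lemma ptr1_swap {d : ℕ} : ptr1 (swapOp d) = 1 := by
  ext j k
  simp only [ptr1, swapOp, Matrix.one_apply]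
  by_cases h : j = k
  · subst h
    rw [Finset.sum_eq_single j]
    · simp
    · intro b _ hb
      rw [if_neg]
      rintro ⟨rfl, _⟩; exact hb rfl
    · simp
  · rw [if_neg h, Finset.sum_eq_zero]
    intro i _
    rw [if_neg]
    rintro ⟨rfl, rfl⟩; exact h rfl

lemma ptr1_kron {d : ℕ} (A B : Matrix (Fin d) (Fin d) ℂ) :
    ptr1 (A ⊗ₖ B) = A.trace • B := by
  ext j k
  simp [ptr1, Matrix.kroneckerMap_apply, Matrix.trace, Matrix.diag, Finset.sum_mul]

lemma trace_ne_zero_of_psd {d : ℕ} {A : Matrix (Fin d) (Fin d) ℂ}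
    (hA : A.PosSemidef) (h0 : A ≠ 0) : A.trace ≠ 0 := by
  obtain ⟨B, rfl⟩ : ∃ B : Matrix (Fin d) (Fin d) ℂ, A = Bᴴ * B := by
    open scoped MatrixOrder Matrix.Norms.L2Operator in
    exact CStarAlgebra.nonneg_iff_eq_star_mul_self.mp hA.nonneg
  intro htr
  have ht : (Bᴴ * B).trace = ((∑ j, ∑ i, Complex.normSq (B i j) : ℝ) : ℂ) := by
    simp only [Matrix.trace, Matrix.diag, Matrix.mul_apply, Matrix.conjTranspose_apply,
      Complex.ofReal_sum]
    refine Finset.sum_congr rfl fun j _ => Finset.sum_congr rfl fun i _ => ?_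
    rw [mul_comm, Complex.star_def, Complex.mul_conj]
  rw [ht] at htr
  have hsum : (∑ j, ∑ i, Complex.normSq (B i j) : ℝ) = 0 := by exact_mod_cast htr
  have hB : B = 0 := by
    ext i j
    have h1 : ∀ j ∈ Finset.univ, (0:ℝ) ≤ ∑ i, Complex.normSq (B i j) :=
      fun j _ => Finset.sum_nonneg fun i _ => Complex.normSq_nonneg _
    have h2 := (Finset.sum_eq_zero_iff_of_nonneg h1).mp hsum j (Finset.mem_univ j)
    have h3 := (Finset.sum_eq_zero_iff_of_nonneg
      (fun i _ => Complex.normSq_nonneg (B i j))).mp h2 i (Finset.mem_univ i)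
    simpa using Complex.normSq_eq_zero.mp h3
  apply h0
  rw [hB]
  simp

/-- If a finite family of nonzero positive semidefinite operators on `ℂ^d`
is a generalized 2-design, then `Σ_ξ E_ξ = (Σ_ξ w_ξ/d)·1`; in particular it forms a POVM
after rescaling. -/
theorem stmt13 {d n : ℕ} (hd : 2 ≤ d) (E : Fin n → Matrix (Fin d) (Fin d) ℂ)
    (hE : ∀ ξ, (E ξ).PosSemidef) (hE0 : ∀ ξ, E ξ ≠ 0)
    (p : ℂ)
    (hp : p = (∑ ξ, (E ξ * E ξ).trace / (E ξ).trace) / (∑ ξ, (E ξ).trace))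
    (hdesign : ∑ ξ, ((E ξ).trace)⁻¹ • (E ξ ⊗ₖ E ξ)
        = ((∑ ξ, (E ξ).trace) / (d : ℂ)) •
            (((1 + p) / ((d : ℂ) + 1)) • Pplus d + ((1 - p) / ((d : ℂ) - 1)) • Pminus d)) :
    ∑ ξ, E ξ = ((∑ ξ, (E ξ).trace) / (d : ℂ)) • (1 : Matrix (Fin d) (Fin d) ℂ) := by
  have htr : ∀ ξ, (E ξ).trace ≠ 0 := fun ξ => trace_ne_zero_of_psd (hE ξ) (hE0 ξ)
  have hd1 : ((d : ℂ) + 1) ≠ 0 := by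
    have : ((d : ℂ) + 1) = ((d + 1 : ℕ) : ℂ) := by push_cast; ring
    rw [this]; exact_mod_cast Nat.succ_ne_zero d
  have hd2 : ((d : ℂ) - 1) ≠ 0 := by
    intro h
    have : (d : ℂ) = 1 := by linear_combination h
    have : d = 1 := by exact_mod_cast this
    omega
  have key := congrArg ptr1 hdesign
  rw [ptr1_sum, ptr1_smul, ptr1_add, ptr1_smul, ptr1_smul] at key
  have hpp : ptr1 (Pplus d) = (((d : ℂ) + 1) / 2) • 1 := by
    rw [Pplus, ptr1_smul, ptr1_add, ptr1_one, ptr1_swap,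
      show ((d:ℂ) • (1:Matrix (Fin d) (Fin d) ℂ) + 1) = ((d:ℂ)+1) • 1 by
        rw [add_smul, one_smul],
      smul_smul]
    congr 1; ring
  have hpm : ptr1 (Pminus d) = (((d : ℂ) - 1) / 2) • 1 := by
    rw [Pminus, ptr1_smul, ptr1_sub, ptr1_one, ptr1_swap,
      show ((d:ℂ) • (1:Matrix (Fin d) (Fin d) ℂ) - 1) = ((d:ℂ)-1) • 1 by
        rw [sub_smul, one_smul],
      smul_smul]
    congr 1; ring
  rw [hpp, hpm] at key
  have hlhs : ∀ ξ ∈ Finset.univ, ptr1 (((E ξ).trace)⁻¹ • (E ξ ⊗ₖ E ξ)) = E ξ := by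
    intro ξ _
    rw [ptr1_smul, ptr1_kron, smul_smul, inv_mul_cancel₀ (htr ξ), one_smul]
  rw [Finset.sum_congr rfl hlhs] at key
  have hc : (1+p)/((d:ℂ)+1) * (((d:ℂ)+1)/2) + (1-p)/((d:ℂ)-1) * (((d:ℂ)-1)/2) = 1 := by
    field_simp
    ring
  rw [key, smul_smul, smul_smul, ← add_smul, hc, one_smul]
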